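/- If X is a CW space and A a subcomplex, then cat(X/A) − 1 ≤ cat(X). -/

import Mathlib

open scoped unitInterval Topology

/-- A subset `A` of `X` is contractible in `X` if its inclusion is nullhomotopic. -/
def ContractibleIn {X : Type} [TopologicalSpace X] (A : Set X) : Prop :=
  ContinuousMap.Nullhomotopic ((⟨Subtype.val, continuous_subtype_val⟩ : C(A, X)))

/-- `LSCatLE X n` : `X` admits an open cover by `n+1` sets, each contractible in `X`. -/
def LSCatLE (X : Type) [TopologicalSpace X] (n : ℕ) : Prop :=
  ∃ U : Fin (n + 1) → Set X, (∀ i, IsOpen (U i)) ∧ (⋃ i, U i) = Set.univ ∧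
    ∀ i, ContractibleIn (U i)

/-- The (normalized) Lusternik–Schnirelmann category of `X`, valued in `ℕ∞`. -/
noncomputable def LSCat (X : Type) [TopologicalSpace X] : ℕ∞ :=
  sInf {c : ℕ∞ | ∃ n : ℕ, c = n ∧ LSCatLE X n}

/-- The LS category of a subspace `A` of `Z`, computed with covers by sets that are
open in `A` (as a subspace) and contractible in the ambient space `Z`. -/
def SubLSCatLE (Z : Type) [TopologicalSpace Z] (A : Set Z) (n : ℕ) : Prop :=
  ∃ U : Fin (n + 1) → Set Z, (∀ i, ∃ V : Set Z, IsOpen V ∧ U i = V ∩ A) ∧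
    (⋃ i, U i) = A ∧ ∀ i, ContractibleIn (U i)

noncomputable def SubLSCat (Z : Type) [TopologicalSpace Z] (A : Set Z) : ℕ∞ :=
  sInf {c : ℕ∞ | ∃ n : ℕ, c = n ∧ SubLSCatLE Z A n}
open scoped unitInterval Topology Topology.Homotopy

universe u

namespace RelativeCWComplex

/-- The `n`-sphere, as in the older Mathlib's `Mathlib/Topology/CWComplex.lean`. -/
noncomputable def sphere (n : ℤ) : TopCat.{u} :=
  TopCat.of <| ULift <| Metric.sphere (0 : EuclideanSpace ℝ <| Fin <| Int.toNat <| n + 1) 1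

/-- The `n`-disk, as in the older Mathlib. -/
noncomputable def disk (n : ℤ) : TopCat.{u} :=
  TopCat.of <| ULift <| Metric.closedBall (0 : EuclideanSpace ℝ <| Fin <| Int.toNat n) 1

/-- The inclusion map from the `n`-sphere to the `(n + 1)`-disk. -/
def sphereInclusion (n : ℤ) : sphere.{u} n ⟶ disk.{u} (n + 1) :=
  TopCat.ofHom ⟨fun x => ⟨⟨x.down.1, le_of_eq x.down.2⟩⟩, by fun_prop⟩

/-- Data for attaching generalized cells along `f`. -/
structure AttachGeneralizedCells {S D : TopCat.{u}} (f : S ⟶ D) (X X' : TopCat.{u}) where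
  cells : Type u
  attachMaps : cells → (S ⟶ X)
  iso_pushout : X' ≅ CategoryTheory.Limits.pushout (CategoryTheory.Limits.Sigma.desc attachMaps)
    (CategoryTheory.Limits.Sigma.map fun (_ : cells) ↦ f)

/-- Attaching `(n + 1)`-cells. -/
def AttachCells (n : ℤ) := AttachGeneralizedCells (sphereInclusion.{u} n)

end RelativeCWComplex

/-- A relative CW complex (older Mathlib definition). -/
structure RelativeCWComplex where
  sk : ℕ → TopCat.{u}
  attachCells (n : ℕ) : RelativeCWComplex.AttachCells.{u} ((n : ℤ) - 1) (sk n) (sk (n + 1))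

/-- A CW complex (older Mathlib definition). -/
structure CWComplex extends RelativeCWComplex.{u} where
  isEmpty_sk_zero : IsEmpty (sk 0)

namespace RelativeCWComplex

/-- The inclusion of a skeleton into the next one. -/
noncomputable abbrev skInclusion (X : RelativeCWComplex.{u}) (n : ℕ) : X.sk n ⟶ X.sk (n + 1) :=
  CategoryTheory.CategoryStruct.comp (CategoryTheory.Limits.pushout.inl _ _)
    (X.attachCells n).iso_pushout.inv

/-- The topological space of a relative CW complex. -/
noncomputable def toTopCat (X : RelativeCWComplex.{u}) : TopCat.{u} :=
  CategoryTheory.Limits.colimit (CategoryTheory.Functor.ofSequence (skInclusion X))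

end RelativeCWComplex

/-- `X` is a CW space: it is homeomorphic to (the realization of) a CW complex. -/
def IsCWSpace (X : Type) [TopologicalSpace X] : Prop :=
  ∃ C : CWComplex.{0}, Nonempty ((RelativeCWComplex.toTopCat C.toRelativeCWComplex) ≃ₜ X)

/-- `X` is a CW space of dimension at most `n`. -/
def IsCWSpaceOfDimLE (X : Type) [TopologicalSpace X] (n : ℕ) : Prop :=
  ∃ C : CWComplex.{0}, Nonempty ((RelativeCWComplex.toTopCat C.toRelativeCWComplex) ≃ₜ X) ∧
    ∀ m : ℕ, n + 1 ≤ m → IsEmpty (C.attachCells m).cells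

/-- The homotopy extension property for the pair `(X, A)`. -/
def HEP {X : Type} [TopologicalSpace X] (A : Set X) : Prop :=
  ∀ (Z : Type) [TopologicalSpace Z] (f : C(X, Z)) (G : C(A × I, Z)),
    (∀ a : A, G (a, 0) = f a) →
    ∃ F : C(X × I, Z), (∀ x, F (x, 0) = f x) ∧ ∀ (a : A) (t : I), F (a, t) = G (a, t)

/-- `A` is (equivalent to) a subcomplex of the CW space `X`: both are CW spaces,
`A` is closed in `X` and the inclusion `A ↪ X` is a cofibration. -/
def IsCWSubcomplex (X : Type) [TopologicalSpace X] (A : Set X) : Prop :=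
  IsCWSpace X ∧ IsCWSpace A ∧ IsClosed A ∧ HEP A

/-- The quotient `X/A` collapsing `A ⊆ X` to a point. -/
def Collapse (X : Type) [TopologicalSpace X] (A : Set X) : Type :=
  Quot (fun a b : X => a ∈ A ∧ b ∈ A)

instance (X : Type) [TopologicalSpace X] (A : Set X) : TopologicalSpace (Collapse X A) :=
  inferInstanceAs (TopologicalSpace (Quot _))

/-- The quotient map `X → X/A`. -/
def collapseMap (X : Type) [TopologicalSpace X] (A : Set X) : C(X, Collapse X A) :=
  ⟨Quot.mk _, continuous_quot_mk⟩

/-- The wedge `X ∨ Y` of two pointed spaces. -/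
def Wedge (X Y : Type) [TopologicalSpace X] [TopologicalSpace Y] (x₀ : X) (y₀ : Y) : Type :=
  Quot (fun a b : X ⊕ Y => a = Sum.inl x₀ ∧ b = Sum.inr y₀)

instance (X Y : Type) [TopologicalSpace X] [TopologicalSpace Y] (x₀ : X) (y₀ : Y) :
    TopologicalSpace (Wedge X Y x₀ y₀) :=
  inferInstanceAs (TopologicalSpace (Quot _))

/-- The image of a generalized loop under a continuous map. -/
def GenLoop.push {N X Y : Type} [TopologicalSpace X] [TopologicalSpace Y] {x : X}
    (f : C(X, Y)) (p : Ω^ N X x) : Ω^ N Y (f x) :=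
  ⟨f.comp p.1, fun y hy => by
    simp only [ContinuousMap.comp_apply]
    rw [p.2 y hy]⟩

/-- The map induced by `f : C(X, Y)` on homotopy groups. -/
def HomotopyGroup.map {N X Y : Type} [TopologicalSpace X] [TopologicalSpace Y]
    (f : C(X, Y)) (x : X) : HomotopyGroup N X x → HomotopyGroup N Y (f x) :=
  Quotient.map (GenLoop.push f)
    (fun _ _ h => h.map fun H => H.compContinuousMap f)

/-- `A` is `m`-connected: nonempty and `π_i(A) = 0` for all `i ≤ m`. -/
def IsMConnected (A : Type) [TopologicalSpace A] (m : ℕ) : Prop :=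
  Nonempty A ∧ ∀ i ≤ m, ∀ a : A, Subsingleton (HomotopyGroup (Fin i) A a)

section Helpers

variable {X : Type} [TopologicalSpace X] {A : Set X}

lemma collapse_eq_iff {x y : X} :
    collapseMap X A x = collapseMap X A y ↔ x = y ∨ (x ∈ A ∧ y ∈ A) := by
  have key : ∀ a b : X, Relation.EqvGen (fun a b : X => a ∈ A ∧ b ∈ A) a b →
      a = b ∨ (a ∈ A ∧ b ∈ A) := by
    intro a b h
    induction h with
    | rel a b hab => exact Or.inr hab
    | refl a => exact Or.inl rfl
    | symm a b _ ih =>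
      rcases ih with rfl | ⟨h1, h2⟩
      · exact Or.inl rfl
      · exact Or.inr ⟨h2, h1⟩
    | trans a b c _ _ ih1 ih2 =>
      rcases ih1 with rfl | ⟨h1, h2⟩
      · exact ih2
      · rcases ih2 with rfl | ⟨h3, h4⟩
        · exact Or.inr ⟨h1, h2⟩
        · exact Or.inr ⟨h1, h4⟩
  constructor
  · intro h
    exact key x y (Quot.eqvGen_exact h)
  · rintro (rfl | h)
    · rfl
    · exact Quot.sound h

lemma collapse_sat {S : Set X} (hs : ∀ s ∈ S, s ∈ A → A ⊆ S) :
    (collapseMap X A) ⁻¹' (collapseMap X A '' S) = S := by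
  ext x
  simp only [Set.mem_preimage, Set.mem_image]
  constructor
  · rintro ⟨s, hsS, hqs⟩
    rcases collapse_eq_iff.mp hqs with rfl | ⟨h1, h2⟩
    · exact hsS
    · exact hs s hsS h1 h2
  · intro hx
    exact ⟨x, hx, rfl⟩

lemma collapse_isOpen_image {S : Set X} (hS : IsOpen S)
    (hsat : (collapseMap X A) ⁻¹' (collapseMap X A '' S) = S) :
    IsOpen (collapseMap X A '' S) := by
  have hq : Topology.IsQuotientMap (Quot.mk (fun a b : X => a ∈ A ∧ b ∈ A)) :=
    isQuotientMap_quot_mk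
  exact hq.isOpen_preimage.mp (by have h : IsOpen ((collapseMap X A) ⁻¹'
    (collapseMap X A '' S)) := (by rw [hsat]; exact hS); exact h)

lemma collapse_isQuotientMap_restrict {S : Set X} (hS : IsOpen S)
    (hsat : (collapseMap X A) ⁻¹' (collapseMap X A '' S) = S) :
    Topology.IsQuotientMap (fun x : S =>
      (⟨collapseMap X A x, Set.mem_image_of_mem _ x.2⟩ : collapseMap X A '' S)) := by
  set q : X → Collapse X A := ⇑(collapseMap X A) with hqdef
  set f : S → (q '' S : Set (Collapse X A)) :=
    fun x : S => ⟨q x, Set.mem_image_of_mem _ x.2⟩ with hfdef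
  have hfcont : Continuous f :=
    ((collapseMap X A).continuous.comp continuous_subtype_val).subtype_mk _
  rw [Topology.isQuotientMap_iff, Topology.isCoinducing_iff, and_comm]
  refine ⟨?_, fun s => ⟨fun hpre => ?_, fun hs => hs.preimage hfcont⟩⟩
  · rintro ⟨z, x, hx, rfl⟩
    exact ⟨⟨x, hx⟩, rfl⟩
  · obtain ⟨O, hO, hOeq⟩ := isOpen_induced_iff.mp hpre
    -- hOeq : Subtype.val ⁻¹' O = f ⁻¹' s
    have hmem : ∀ x : X, q x ∈ Subtype.val '' s ↔ x ∈ O ∩ S := by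
      intro x
      constructor
      · rintro ⟨z, hzs, hzx⟩
        obtain ⟨w, hwS, hwq⟩ := z.2
        have hxS : x ∈ S := by
          rw [← hsat]
          exact ⟨w, hwS, by rw [← hzx, hwq]⟩
        have : f ⟨x, hxS⟩ = z := Subtype.ext hzx.symm
        have hfx : (⟨x, hxS⟩ : S) ∈ f ⁻¹' s := by rw [Set.mem_preimage, this]; exact hzs
        rw [← hOeq] at hfx
        exact ⟨hfx, hxS⟩
      · rintro ⟨hxO, hxS⟩
        have : (⟨x, hxS⟩ : S) ∈ f ⁻¹' s := by rw [← hOeq]; exact hxO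
        exact ⟨f ⟨x, hxS⟩, this, rfl⟩
    have hPopen : IsOpen (Subtype.val '' s : Set (Collapse X A)) := by
      have hq : Topology.IsQuotientMap (Quot.mk (fun a b : X => a ∈ A ∧ b ∈ A)) :=
        isQuotientMap_quot_mk
      refine hq.isOpen_preimage.mp ?_
      have : Quot.mk (fun a b : X => a ∈ A ∧ b ∈ A) ⁻¹' (Subtype.val '' s) = O ∩ S := by
        ext x; exact hmem x
      have h2 : IsOpen (O ∩ S) := hO.inter hS
      rw [← this] at h2
      exact h2
    have : s = Subtype.val ⁻¹' (Subtype.val '' s) :=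
      (Set.preimage_image_eq s Subtype.val_injective).symm
    rw [this]
    exact hPopen.preimage continuous_subtype_val

end Helpers

section Helpers2

variable {X : Type} [TopologicalSpace X] {A : Set X}

lemma contractibleIn_collapse_image {S : Set X} (hS : IsOpen S)
    (hsat : (collapseMap X A) ⁻¹' (collapseMap X A '' S) = S)
    (K : C(I × S, X)) (c : Collapse X A)
    (h0 : ∀ x : S, K (0, x) = x)
    (h1 : ∀ x : S, collapseMap X A (K (1, x)) = c)
    (hcomp : ∀ (t : I) (x y : S), collapseMap X A x.val = collapseMap X A y.val →
      collapseMap X A (K (t, x)) = collapseMap X A (K (t, y))) :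
    ContractibleIn (collapseMap X A '' S) := by
  classical
  set q : X → Collapse X A := ⇑(collapseMap X A) with hqdef
  set W : Set (Collapse X A) := q '' S with hWdef
  have hlift0 : ∀ z : W, ∃ x : S, q x = z.val := by
    rintro ⟨z, x, hx, rfl⟩
    exact ⟨⟨x, hx⟩, rfl⟩
  set lift : W → S := fun z => (hlift0 z).choose with hliftdef
  have hlift : ∀ z : W, q (lift z) = z.val := fun z => (hlift0 z).choose_spec
  set Gfun : I × W → Collapse X A := fun p => q (K (p.1, lift p.2)) with hGdef
  set qS : S → W := fun x => ⟨q x, Set.mem_image_of_mem _ x.2⟩ with hqSdef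
  have hq : Topology.IsQuotientMap qS := collapse_isQuotientMap_restrict hS hsat
  have hGcont : Continuous Gfun := by
    apply hq.continuous_lift_prod_right
    have heq : (fun p : I × S => Gfun (p.1, qS p.2)) = fun p : I × S => q (K p) := by
      funext p
      exact hcomp p.1 (lift (qS p.2)) p.2 (hlift (qS p.2))
    rw [heq]
    exact continuous_quot_mk.comp K.continuous
  refine ⟨c, ⟨⟨⟨Gfun, hGcont⟩, ?_, ?_⟩⟩⟩
  · intro z
    show q (K (0, lift z)) = z.val
    rw [h0 (lift z)]
    exact hlift z
  · intro z
    exact h1 (lift z)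

end Helpers2

section Bridge

variable {X : Type} [TopologicalSpace X] {A : Set X}

lemma bridge (hcl : IsClosed A) (hhep : HEP A) {n : ℕ} (h : LSCatLE X n) :
    LSCatLE (Collapse X A) (n + 1) := by
  classical
  obtain ⟨U, hUo, hUcov, hUc⟩ := h
  obtain ⟨y₀, -⟩ := hUc 0
  set q : X → Collapse X A := ⇑(collapseMap X A) with hqdef
  -- Apply HEP to get the retraction data
  obtain ⟨F, hF0, hFA⟩ := hhep {p : X × I // p.2 = 0 ∨ p.1 ∈ A}
    ⟨fun x => ⟨(x, 0), Or.inl rfl⟩, (continuous_id.prodMk continuous_const).subtype_mk _⟩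
    ⟨fun p => ⟨(p.1.val, p.2), Or.inr p.1.2⟩,
      ((continuous_subtype_val.comp continuous_fst).prodMk continuous_snd).subtype_mk _⟩
    (fun a => Subtype.ext rfl)
  set H : X → I → X := fun x t => ((F (x, t)).val).1 with hHdef
  have hH0 : ∀ x : X, H x 0 = x := by
    intro x
    show ((F (x, 0)).val).1 = x
    rw [hF0 x]
    rfl
  have hHA : ∀ (a : X) (ha : a ∈ A) (t : I), H a t = a := by
    intro a ha t
    show ((F (a, t)).val).1 = a
    rw [hFA ⟨a, ha⟩ t]
    rfl
  set N : Set X := {x : X | ((F (x, 1)).val).2 ≠ 0} with hNdef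
  have hNopen : IsOpen N := by
    have hcont : Continuous fun x : X => ((F (x, 1)).val).2 :=
      (continuous_subtype_val.comp
        (F.continuous.comp (continuous_id.prodMk continuous_const))).snd
    exact isOpen_compl_singleton.preimage hcont
  have hNA : A ⊆ N := by
    intro a ha
    show ((F (a, 1)).val).2 ≠ 0
    rw [hFA ⟨a, ha⟩ 1]
    intro hcon
    simpa using congrArg Subtype.val hcon
  have hN1 : ∀ x ∈ N, H x 1 ∈ A := by
    intro x hx
    rcases (F (x, 1)).2 with h' | h'
    · exact absurd h' hx
    · exact h'
  have satN : q ⁻¹' (q '' N) = N := collapse_sat (fun s _ _ => hNA)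
  have satU : ∀ i, q ⁻¹' (q '' (U i \ A)) = U i \ A :=
    fun i => collapse_sat (fun s hs hsA => absurd hsA hs.2)
  refine ⟨Fin.snoc (fun i : Fin (n + 1) => q '' (U i \ A)) (q '' N), ?_, ?_, ?_⟩
  · refine Fin.lastCases ?_ ?_
    · rw [Fin.snoc_last]
      exact collapse_isOpen_image hNopen satN
    · intro i
      rw [Fin.snoc_castSucc]
      exact collapse_isOpen_image ((hUo i).sdiff hcl) (satU i)
  · rw [Set.eq_univ_iff_forall]
    intro z
    obtain ⟨x, rfl⟩ : ∃ x, q x = z := Quot.exists_rep z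
    rw [Set.mem_iUnion]
    by_cases hx : x ∈ A
    · refine ⟨Fin.last _, ?_⟩
      rw [Fin.snoc_last]
      exact ⟨x, hNA hx, rfl⟩
    · obtain ⟨i, hi⟩ := Set.mem_iUnion.mp (hUcov ▸ Set.mem_univ x)
      refine ⟨Fin.castSucc i, ?_⟩
      rw [Fin.snoc_castSucc]
      exact ⟨x, ⟨hi, hx⟩, rfl⟩
  · refine Fin.lastCases ?_ ?_
    · rw [Fin.snoc_last]
      set c : Collapse X A := if hA : A.Nonempty then q hA.choose else q y₀ with hcdef
      refine contractibleIn_collapse_image hNopen satN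
        ⟨fun p => H p.2.val p.1, ?_⟩ c ?_ ?_ ?_
      · exact (continuous_subtype_val.comp
          (F.continuous.comp ((continuous_subtype_val.comp continuous_snd).prodMk
            continuous_fst))).fst
      · intro x
        exact hH0 x.val
      · intro x
        have hxA : H x.val 1 ∈ A := hN1 x.val x.2
        by_cases hA : A.Nonempty
        · rw [hcdef, dif_pos hA]
          exact Quot.sound ⟨hxA, hA.choose_spec⟩
        · exact absurd ⟨_, hxA⟩ hA
      · intro t x y hxy
        rcases collapse_eq_iff.mp hxy with heq | ⟨hx, hy⟩
        · rw [Subtype.ext heq]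
        · show q (H x.val t) = q (H y.val t)
          rw [hHA x.val hx t, hHA y.val hy t]
          exact hxy
    · intro i
      rw [Fin.snoc_castSucc]
      obtain ⟨y, hy⟩ := hUc i
      obtain ⟨K⟩ := hy
      refine contractibleIn_collapse_image ((hUo i).sdiff hcl) (satU i)
        (K.toContinuousMap.comp
          ⟨fun p => (p.1, ⟨p.2.val, p.2.2.1⟩),
            continuous_fst.prodMk ((continuous_subtype_val.comp continuous_snd).subtype_mk _)⟩)
        (q y) ?_ ?_ ?_
      · intro x
        exact K.apply_zero ⟨x.val, x.2.1⟩
      · intro x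
        show q (K (1, ⟨x.val, x.2.1⟩)) = q y
        rw [K.apply_one]
        rfl
      · intro t x y' hxy
        rcases collapse_eq_iff.mp hxy with heq | ⟨hx, hy'⟩
        · rw [Subtype.ext heq]
        · exact absurd hx x.2.2

end Bridge

/-- If `X` is a CW space and `A` a subcomplex, then `cat(X/A) - 1 ≤ cat X`. -/
theorem lscat_collapse_le (X : Type) [TopologicalSpace X] (A : Set X)
    (hA : IsCWSubcomplex X A) :
    LSCat (Collapse X A) - 1 ≤ LSCat X := by
  obtain ⟨-, -, hcl, hhep⟩ := hA
  refine le_sInf ?_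
  rintro c ⟨n, rfl, hn⟩
  have h2 : LSCat (Collapse X A) ≤ ((n + 1 : ℕ) : ℕ∞) :=
    sInf_le ⟨n + 1, rfl, bridge hcl hhep hn⟩
  rw [tsub_le_iff_right]
  calc LSCat (Collapse X A) ≤ ((n + 1 : ℕ) : ℕ∞) := h2
    _ = (n : ℕ∞) + 1 := by push_cast; ring
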